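/- The groups G₁ = ⟨a, b, c | ab = ba, bc = c b⁻¹⟩ and G₂ = ⟨x, y, z | yx = x y⁻¹, yz = z y⁻¹⟩ are isomorphic. -/

import Mathlib

/-- Relations for `G₁ = ⟨a, b, c | ab = ba, bc = c b⁻¹⟩`. -/
def g1Rels : Set (FreeGroup (Fin 3)) :=
  { FreeGroup.of 0 * FreeGroup.of 1 * (FreeGroup.of 0)⁻¹ * (FreeGroup.of 1)⁻¹,
    FreeGroup.of 1 * FreeGroup.of 2 * FreeGroup.of 1 * (FreeGroup.of 2)⁻¹ }

/-- Relations for `G₂ = ⟨x, y, z | yx = x y⁻¹, yz = z y⁻¹⟩`. -/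
def g2Rels : Set (FreeGroup (Fin 3)) :=
  { FreeGroup.of 1 * FreeGroup.of 0 * FreeGroup.of 1 * (FreeGroup.of 0)⁻¹,
    FreeGroup.of 1 * FreeGroup.of 2 * FreeGroup.of 1 * (FreeGroup.of 2)⁻¹ }

lemma relOne {ι : Type*} (rels : Set (FreeGroup ι)) {r : FreeGroup ι} (h : r ∈ rels) :
    PresentedGroup.mk rels r = 1 := by
  have : r ∈ Subgroup.normalClosure rels := Subgroup.subset_normalClosure h
  exact (QuotientGroup.eq_one_iff r).2 this

/-- `a ↦ x z⁻¹, b ↦ y, c ↦ z`. -/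
def f12 : Fin 3 → PresentedGroup g2Rels :=
  ![PresentedGroup.of 0 * (PresentedGroup.of 2)⁻¹, PresentedGroup.of 1, PresentedGroup.of 2]

/-- `x ↦ a c, y ↦ b, z ↦ c`. -/
def f21 : Fin 3 → PresentedGroup g1Rels :=
  ![PresentedGroup.of 0 * PresentedGroup.of 2, PresentedGroup.of 1, PresentedGroup.of 2]

lemma g2rel1 : (PresentedGroup.of 1 : PresentedGroup g2Rels) * PresentedGroup.of 0 *
    PresentedGroup.of 1 * (PresentedGroup.of 0)⁻¹ = 1 := by
  have := relOne g2Rels (r := FreeGroup.of 1 * FreeGroup.of 0 * FreeGroup.of 1 * (FreeGroup.of 0)⁻¹)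
    (by simp [g2Rels])
  simpa [PresentedGroup.of] using this

lemma g2rel2 : (PresentedGroup.of 1 : PresentedGroup g2Rels) * PresentedGroup.of 2 *
    PresentedGroup.of 1 * (PresentedGroup.of 2)⁻¹ = 1 := by
  have := relOne g2Rels (r := FreeGroup.of 1 * FreeGroup.of 2 * FreeGroup.of 1 * (FreeGroup.of 2)⁻¹)
    (by simp [g2Rels])
  simpa [PresentedGroup.of] using this

lemma g1rel1 : (PresentedGroup.of 0 : PresentedGroup g1Rels) * PresentedGroup.of 1 *
    (PresentedGroup.of 0)⁻¹ * (PresentedGroup.of 1)⁻¹ = 1 := by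
  have := relOne g1Rels (r := FreeGroup.of 0 * FreeGroup.of 1 * (FreeGroup.of 0)⁻¹ * (FreeGroup.of 1)⁻¹)
    (by simp [g1Rels])
  simpa [PresentedGroup.of] using this

lemma g1rel2 : (PresentedGroup.of 1 : PresentedGroup g1Rels) * PresentedGroup.of 2 *
    PresentedGroup.of 1 * (PresentedGroup.of 2)⁻¹ = 1 := by
  have := relOne g1Rels (r := FreeGroup.of 1 * FreeGroup.of 2 * FreeGroup.of 1 * (FreeGroup.of 2)⁻¹)
    (by simp [g1Rels])
  simpa [PresentedGroup.of] using this

lemma h12 : ∀ r ∈ g1Rels, FreeGroup.lift f12 r = 1 := by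
  intro r hr
  rcases hr with h | h <;> subst h <;>
    simp only [map_mul, map_inv, FreeGroup.lift_apply_of, f12, Matrix.cons_val_zero,
      Matrix.cons_val_one, Matrix.head_cons, Matrix.cons_val_two, Matrix.tail_cons]
  · -- (x z⁻¹) y (x z⁻¹)⁻¹ y⁻¹ = 1
    set X : PresentedGroup g2Rels := PresentedGroup.of 0
    set Y : PresentedGroup g2Rels := PresentedGroup.of 1
    set Z : PresentedGroup g2Rels := PresentedGroup.of 2
    have h1 : Y * X * Y = X := by
      have := g2rel2
      have h := g2rel1
      group at h ⊢
      calc Y * X * Y = (Y * X * Y * X⁻¹) * X := by group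
        _ = X := by rw [g2rel1]; group
    have h2 : Y * Z * Y = Z := by
      calc Y * Z * Y = (Y * Z * Y * Z⁻¹) * Z := by group
        _ = Z := by rw [g2rel2]; group
    -- z⁻¹ y z = y⁻¹ ; x⁻¹ y x = y⁻¹
    have hz : Z⁻¹ * Y * Z = Y⁻¹ := by
      have : Y * Z = Z * Y⁻¹ := by
        calc Y * Z = (Y * Z * Y) * Y⁻¹ := by group
          _ = Z * Y⁻¹ := by rw [h2]
      calc Z⁻¹ * Y * Z = Z⁻¹ * (Y * Z) := by group
        _ = Z⁻¹ * (Z * Y⁻¹) := by rw [this]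
        _ = Y⁻¹ := by group
    have hx : X * Y⁻¹ * X⁻¹ = Y := by
      have : Y * X = X * Y⁻¹ := by
        calc Y * X = (Y * X * Y) * Y⁻¹ := by group
          _ = X * Y⁻¹ := by rw [h1]
      calc X * Y⁻¹ * X⁻¹ = (Y * X) * X⁻¹ := by rw [this]
        _ = Y := by group
    calc X * Z⁻¹ * Y * (X * Z⁻¹)⁻¹ * Y⁻¹
        = X * (Z⁻¹ * Y * Z) * X⁻¹ * Y⁻¹ := by group
      _ = X * Y⁻¹ * X⁻¹ * Y⁻¹ := by rw [hz]
      _ = Y * Y⁻¹ := by rw [hx]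
      _ = 1 := by group
  · exact g2rel2

lemma h21 : ∀ r ∈ g2Rels, FreeGroup.lift f21 r = 1 := by
  intro r hr
  rcases hr with h | h <;> subst h <;>
    simp only [map_mul, map_inv, FreeGroup.lift_apply_of, f21, Matrix.cons_val_zero,
      Matrix.cons_val_one, Matrix.head_cons, Matrix.cons_val_two, Matrix.tail_cons]
  · -- y (a c) y (a c)⁻¹ = 1
    set A : PresentedGroup g1Rels := PresentedGroup.of 0
    set B : PresentedGroup g1Rels := PresentedGroup.of 1
    set C : PresentedGroup g1Rels := PresentedGroup.of 2
    have hcomm : A * B = B * A := by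
      calc A * B = (A * B * A⁻¹ * B⁻¹) * (B * A) := by group
        _ = B * A := by rw [g1rel1]; group
    have hc : C * B * C⁻¹ = B⁻¹ := by
      calc C * B * C⁻¹ = B⁻¹ * (B * C * B * C⁻¹) := by group
        _ = B⁻¹ := by rw [g1rel2]; group
    calc B * (A * C) * B * (A * C)⁻¹
        = (B * A) * (C * B * C⁻¹) * A⁻¹ := by group
      _ = (A * B) * B⁻¹ * A⁻¹ := by rw [hcomm, hc]
      _ = 1 := by group
  · exact g1rel2

theorem g1_iso_g2 :
    Nonempty (PresentedGroup g1Rels ≃* PresentedGroup g2Rels) := by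
  let φ : PresentedGroup g1Rels →* PresentedGroup g2Rels := PresentedGroup.toGroup h12
  let ψ : PresentedGroup g2Rels →* PresentedGroup g1Rels := PresentedGroup.toGroup h21
  have hψφ : ψ.comp φ = MonoidHom.id _ := by
    apply PresentedGroup.ext
    intro x
    fin_cases x <;>
      simp [φ, ψ, PresentedGroup.toGroup.of, f12, f21]
  have hφψ : φ.comp ψ = MonoidHom.id _ := by
    apply PresentedGroup.ext
    intro x
    fin_cases x <;>
      simp [φ, ψ, PresentedGroup.toGroup.of, f12, f21]
  exact ⟨{ toFun := φ, invFun := ψ,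
           left_inv := fun g => congrArg (·) (DFunLike.congr_fun hψφ g),
           right_inv := fun g => DFunLike.congr_fun hφψ g,
           map_mul' := φ.map_mul }⟩
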